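/- Let λ, A > 0, and let (a_t)_{t≥1} be a sequence in ℝ^d with ‖a_t‖₂ ≤ A. Define V_0 = λI and V_t = V_{t-1} + a_t a_tᵀ. Then for all n ≥ 1, Σ_{t=1}^n ‖a_t‖²_{V_{t-1}^{-1}} ≤ 2d·max{1, A²/λ}·log(1 + nA²/(dλ)). -/

import Mathlib

open Finset Matrix



lemma dot_self_nonneg' {d : ℕ} (x : Fin d → ℝ) : 0 ≤ x ⬝ᵥ x :=
  Finset.sum_nonneg fun i _ => mul_self_nonneg (x i)

lemma dot_self_pos' {d : ℕ} {x : Fin d → ℝ} (hx : x ≠ 0) : 0 < x ⬝ᵥ x := by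
  obtain ⟨i, hi⟩ := Function.ne_iff.mp hx
  exact Finset.sum_pos' (fun j _ => mul_self_nonneg (x j))
    ⟨i, Finset.mem_univ i, mul_self_pos.mpr hi⟩




lemma aux_inv_bound {d : ℕ} {lam : ℝ} (hlam : 0 < lam)
    {V : Matrix (Fin d) (Fin d) ℝ} (hV : V.PosDef)
    (hlow : ∀ y : Fin d → ℝ, lam * (y ⬝ᵥ y) ≤ y ⬝ᵥ V *ᵥ y) (x : Fin d → ℝ) :
    x ⬝ᵥ V⁻¹ *ᵥ x ≤ (x ⬝ᵥ x) / lam := by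
  set y : Fin d → ℝ := V⁻¹ *ᵥ x with hy
  have hdet : IsUnit V.det := isUnit_iff_ne_zero.mpr hV.det_pos.ne'
  have hVy : V *ᵥ y = x := by
    rw [hy, Matrix.mulVec_mulVec, Matrix.mul_nonsing_inv _ hdet, Matrix.one_mulVec]
  have hyx : y ⬝ᵥ x = x ⬝ᵥ y := dotProduct_comm _ _
  have h2 : lam * (y ⬝ᵥ y) ≤ x ⬝ᵥ y := by
    have := hlow y
    rwa [hVy, hyx] at this
  have hu : 0 ≤ x ⬝ᵥ y := le_trans (by nlinarith [dot_self_nonneg' y]) h2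
  have hcs : (x ⬝ᵥ y) ^ 2 ≤ (x ⬝ᵥ x) * (y ⬝ᵥ y) := by
    have := Finset.sum_mul_sq_le_sq_mul_sq Finset.univ x y
    simpa [dotProduct, pow_two, Finset.mul_sum] using this
  have hX : 0 ≤ x ⬝ᵥ x := dot_self_nonneg' x
  rw [le_div_iff₀ hlam]
  rcases eq_or_lt_of_le hu with h0 | h0
  · rw [← h0]; linarith
  · nlinarith



-- scalar lemma: u ≤ 2 M log(1+u)
lemma aux_scalar {u M : ℝ} (hu : 0 ≤ u) (huM : u ≤ M) (hM : 1 ≤ M) :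
    u ≤ 2 * M * Real.log (1 + u) := by
  have h1u : 0 < 1 + u := by linarith
  have hlog : u / (1 + u) ≤ Real.log (1 + u) := by
    have := Real.log_le_sub_one_of_pos (x := (1 + u)⁻¹) (by positivity)
    rw [Real.log_inv] at this
    have : -( (1+u)⁻¹ - 1) ≤ Real.log (1+u) := by linarith
    have he : -((1+u)⁻¹ - 1) = u / (1+u) := by
      field_simp
      ring
    linarith [he ▸ this]
  have : u ≤ 2 * M * (u / (1 + u)) := by
    rw [mul_div_assoc']
    rw [le_div_iff₀ h1u]
    nlinarith
  nlinarith [mul_le_mul_of_nonneg_left hlog (by linarith : (0:ℝ) ≤ 2 * M)]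


lemma aux_det {d : ℕ} {V : Matrix (Fin d) (Fin d) ℝ} (hdet : IsUnit V.det)
    (a : Fin d → ℝ) :
    (V + Matrix.vecMulVec a a).det = V.det * (1 + a ⬝ᵥ V⁻¹ *ᵥ a) := by
  rw [Matrix.vecMulVec_eq Unit, Matrix.det_add_replicateCol_mul_replicateRow hdet]
  congr 1
  rw [Matrix.det_unique]
  simp [Matrix.mul_apply, Matrix.replicateRow, Matrix.replicateCol, dotProduct, Matrix.mulVec, Matrix.one_apply,
    Finset.mul_sum, Finset.sum_mul]
  rw [Finset.sum_comm]
  apply Finset.sum_congr rfl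
  intro i _
  apply Finset.sum_congr rfl
  intro j _
  ring


lemma aux_trace {d : ℕ} {A : Matrix (Fin d) (Fin d) ℝ} (hA : A.IsHermitian) :
    A.trace = ∑ i, hA.eigenvalues i := by
  simpa using hA.trace_eq_sum_eigenvalues

lemma aux_logdet {d : ℕ} (hd : 0 < d) {A : Matrix (Fin d) (Fin d) ℝ} (hA : A.PosDef) :
    Real.log A.det ≤ d * Real.log (A.trace / d) := by
  have hherm := hA.isHermitian
  have heig : ∀ i, 0 < hherm.eigenvalues i := hA.eigenvalues_pos
  have hdet : A.det = ∏ i, hherm.eigenvalues i := by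
    have := hherm.det_eq_prod_eigenvalues
    simpa using this
  rw [hdet, Real.log_prod (fun i _ => (heig i).ne')]
  -- Jensen: ∑ (1/d) log λ_i ≤ log (∑ (1/d) λ_i)
  have hjen := (strictConcaveOn_log_Ioi.concaveOn).le_map_sum (t := Finset.univ)
    (w := fun _ : Fin d => (d : ℝ)⁻¹) (p := fun i => hherm.eigenvalues i)
    (fun i _ => by positivity)
    (by simp [Finset.card_univ]; field_simp)
    (fun i _ => heig i)
  have htr : A.trace = ∑ i, hherm.eigenvalues i := aux_trace hherm
  have h2 : ∑ i, (d : ℝ)⁻¹ * Real.log (hherm.eigenvalues i)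
      ≤ Real.log (A.trace / d) := by
    have htr' : A.trace / d = ∑ i, (d:ℝ)⁻¹ • hherm.eigenvalues i := by
      rw [htr, div_eq_mul_inv, mul_comm, Finset.mul_sum]
      simp [smul_eq_mul]
    rw [htr']
    exact hjen
  have hd' : (0:ℝ) < d := by exact_mod_cast hd
  calc ∑ i, Real.log (hherm.eigenvalues i)
      = d * ∑ i, (d:ℝ)⁻¹ * Real.log (hherm.eigenvalues i) := by
        rw [Finset.mul_sum]; apply Finset.sum_congr rfl; intro i _; field_simp
    _ ≤ d * Real.log (A.trace / d) := by
        apply mul_le_mul_of_nonneg_left h2 hd'.le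

theorem stmt_6 (d : ℕ) (lam A : ℝ) (hlam : 0 < lam) (hA : 0 < A)
    (a : ℕ → Fin d → ℝ)
    (ha : ∀ t ≥ 1, Real.sqrt (a t ⬝ᵥ a t) ≤ A)
    (V : ℕ → Matrix (Fin d) (Fin d) ℝ)
    (hV0 : V 0 = lam • (1 : Matrix (Fin d) (Fin d) ℝ))
    (hV : ∀ t ≥ 1, V t = V (t - 1) + Matrix.vecMulVec (a t) (a t)) :
    ∀ n ≥ 1, ∑ t ∈ Finset.Icc 1 n, a t ⬝ᵥ (V (t - 1))⁻¹.mulVec (a t)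
      ≤ 2 * d * max 1 (A ^ 2 / lam) * Real.log (1 + n * A ^ 2 / (d * lam)) := by
  intro n hn
  rcases Nat.eq_zero_or_pos d with hd | hd
  · subst hd
    simp [dotProduct]
  -- nonzero dimension
  have hd' : (0:ℝ) < d := by exact_mod_cast hd
  -- a t ⬝ a t ≤ A^2
  have haa : ∀ t ≥ 1, a t ⬝ᵥ a t ≤ A ^ 2 := by
    intro t ht
    have h1 := ha t ht
    have h2 := dot_self_nonneg' (a t)
    nlinarith [Real.sq_sqrt h2, Real.sqrt_nonneg (a t ⬝ᵥ a t)]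
  -- quadratic lower bound
  have hlow : ∀ t, ∀ y : Fin d → ℝ, lam * (y ⬝ᵥ y) ≤ y ⬝ᵥ (V t) *ᵥ y := by
    intro t
    induction t with
    | zero =>
      intro y
      rw [hV0, Matrix.smul_mulVec, Matrix.one_mulVec, dotProduct_smul]
      simp [smul_eq_mul]
    | succ k ih =>
      intro y
      have hk : V (k+1) = V k + Matrix.vecMulVec (a (k+1)) (a (k+1)) := by
        simpa using hV (k+1) (by omega)
      rw [hk, Matrix.add_mulVec, dotProduct_add]
      have hpsd : 0 ≤ y ⬝ᵥ (Matrix.vecMulVec (a (k+1)) (a (k+1))) *ᵥ y := by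
        have heq : y ⬝ᵥ (Matrix.vecMulVec (a (k+1)) (a (k+1))) *ᵥ y
            = (a (k+1) ⬝ᵥ y) ^ 2 := by
          simp only [Matrix.mulVec, dotProduct, Matrix.vecMulVec_apply, pow_two,
            Finset.mul_sum, Finset.sum_mul]
          rw [Finset.sum_comm]
          apply Finset.sum_congr rfl; intro i _
          apply Finset.sum_congr rfl; intro j _
          ring
        rw [heq]; positivity
      linarith [ih y]
  -- hermitian
  have hherm : ∀ t, (V t).IsHermitian := by
    intro t
    induction t with
    | zero =>
      rw [hV0]
      simp [Matrix.IsHermitian]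
    | succ k ih =>
      have hk : V (k+1) = V k + Matrix.vecMulVec (a (k+1)) (a (k+1)) := by
        simpa using hV (k+1) (by omega)
      rw [hk]
      refine ih.add ?_
      ext i j
      simp [Matrix.conjTranspose_apply, Matrix.vecMulVec_apply, mul_comm]
  -- positive definite
  have hpd : ∀ t, (V t).PosDef := by
    intro t
    refine Matrix.PosDef.of_dotProduct_mulVec_pos (hherm t) fun x hx => ?_
    have h1 : 0 < lam * (x ⬝ᵥ x) := mul_pos hlam (dot_self_pos' hx)
    have h2 := hlow t x
    simpa using lt_of_lt_of_le h1 h2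
  set u : ℕ → ℝ := fun t => a t ⬝ᵥ (V (t-1))⁻¹ *ᵥ a t with hu
  -- u nonneg
  have hun : ∀ t, 0 ≤ u t := by
    intro t
    have := ((hpd (t-1)).inv).posSemidef.dotProduct_mulVec_nonneg (a t)
    simpa [hu] using this
  -- u upper bound
  have hub : ∀ t ≥ 1, u t ≤ A ^ 2 / lam := by
    intro t ht
    refine le_trans (aux_inv_bound hlam (hpd (t-1)) (hlow (t-1)) (a t)) ?_
    gcongr
    exact haa t ht
  -- determinant recursion
  have hdetrec : ∀ t ≥ 1, (V t).det = (V (t-1)).det * (1 + u t) := by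
    intro t ht
    rw [hV t ht]
    exact aux_det (isUnit_iff_ne_zero.mpr (hpd (t-1)).det_pos.ne') (a t)
  -- telescoping of log det
  have hlogsum : ∀ m : ℕ, Real.log (V m).det
      = Real.log (V 0).det + ∑ t ∈ Finset.Icc 1 m, Real.log (1 + u t) := by
    intro m
    induction m with
    | zero => simp
    | succ k ih =>
      rw [Finset.sum_Icc_succ_top (by omega : 1 ≤ k + 1)]
      have hrec := hdetrec (k+1) (by omega)
      simp only [Nat.add_sub_cancel] at hrec
      rw [hrec, Real.log_mul (hpd k).det_pos.ne'
        (by have := hun (k+1); positivity), ih]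
      ring
  -- trace bound
  have htr : ∀ m : ℕ, (V m).trace ≤ d * lam + m * A ^ 2 := by
    intro m
    induction m with
    | zero =>
      rw [hV0, Matrix.trace_smul, Matrix.trace_one]
      simp [smul_eq_mul, mul_comm]
    | succ k ih =>
      have hk : V (k+1) = V k + Matrix.vecMulVec (a (k+1)) (a (k+1)) := by
        simpa using hV (k+1) (by omega)
      rw [hk, Matrix.trace_add]
      have htv : (Matrix.vecMulVec (a (k+1)) (a (k+1))).trace = a (k+1) ⬝ᵥ a (k+1) := by
        simp [Matrix.trace, Matrix.diag, Matrix.vecMulVec_apply, dotProduct]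
      rw [htv]
      have := haa (k+1) (by omega)
      push_cast
      linarith
  -- positivity of trace
  haveI : Nonempty (Fin d) := ⟨⟨0, hd⟩⟩
  have htrpos : 0 < (V n).trace := by
    rw [aux_trace (hpd n).isHermitian]
    exact Finset.sum_pos (fun i _ => (hpd n).eigenvalues_pos i) Finset.univ_nonempty
  set M : ℝ := max 1 (A ^ 2 / lam) with hM
  have hM1 : (1:ℝ) ≤ M := le_max_left _ _
  have hMA : A ^ 2 / lam ≤ M := le_max_right _ _
  -- step 1 : sum of u ≤ 2 M sum of logs
  have step1 : ∑ t ∈ Finset.Icc 1 n, u t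
      ≤ 2 * M * ∑ t ∈ Finset.Icc 1 n, Real.log (1 + u t) := by
    rw [Finset.mul_sum]
    apply Finset.sum_le_sum
    intro t htm
    have ht1 : 1 ≤ t := (Finset.mem_Icc.mp htm).1
    exact aux_scalar (hun t) (le_trans (hub t ht1) hMA) hM1
  -- det V 0
  have hdet0 : Real.log (V 0).det = d * Real.log lam := by
    rw [hV0, Matrix.det_smul, Matrix.det_one, mul_one, Real.log_pow]
    simp
  -- step 3 : log det V n ≤ d log (trace/d)
  have step3 : Real.log (V n).det ≤ d * Real.log ((V n).trace / d) :=
    aux_logdet hd (hpd n)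
  -- step 4
  have step4 : Real.log ((V n).trace / d) - Real.log lam
      ≤ Real.log (1 + n * A ^ 2 / (d * lam)) := by
    rw [← Real.log_div (by positivity) hlam.ne']
    apply Real.log_le_log (by positivity)
    rw [div_div]
    rw [div_le_iff₀ (by positivity)]
    have hexp : (1 + ↑n * A ^ 2 / (↑d * lam)) * (↑d * lam) = ↑d * lam + ↑n * A ^ 2 := by
      field_simp
    rw [hexp]
    exact htr n
  -- combine
  have hsum : ∑ t ∈ Finset.Icc 1 n, Real.log (1 + u t)
      = Real.log (V n).det - d * Real.log lam := by
    rw [hlogsum n, hdet0]; ring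
  have h2M : (0:ℝ) ≤ 2 * M := by linarith
  calc ∑ t ∈ Finset.Icc 1 n, a t ⬝ᵥ (V (t - 1))⁻¹.mulVec (a t)
      = ∑ t ∈ Finset.Icc 1 n, u t := rfl
    _ ≤ 2 * M * ∑ t ∈ Finset.Icc 1 n, Real.log (1 + u t) := step1
    _ = 2 * M * (Real.log (V n).det - ↑d * Real.log lam) := by rw [hsum]
    _ ≤ 2 * M * (↑d * Real.log ((V n).trace / d) - ↑d * Real.log lam) := by
        apply mul_le_mul_of_nonneg_left _ h2M
        linarith [step3]
    _ = 2 * ↑d * M * (Real.log ((V n).trace / d) - Real.log lam) := by ring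
    _ ≤ 2 * ↑d * M * Real.log (1 + ↑n * A ^ 2 / (↑d * lam)) := by
        apply mul_le_mul_of_nonneg_left step4
        positivity
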